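/- arXiv:1303.5330 — 2 statements merged into one kernel-verified Lean document; each statement's English description precedes it below -/
import Mathlib

section
/- Let c > 0 and α > 1, and let z : [0,∞) → ℝ be differentiable with z'(t) = -c·|z(t)|^α·sign(z(t)) for all t ≥ 0, where sign(x) = x/|x| for x ≠ 0 and sign(0) = 0. Then |z(t)| ≤ 1 for every t ≥ 1/(c(α-1)); i.e. the convergence time to the unit ball is uniformly bounded by the constant 1/(c(α-1)) independently of the initial condition z(0). -/
private lemma self_mul_sign' (x : ℝ) : x * Real.sign x = |x| := by
  rcases lt_trichotomy x 0 with h | h | h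
  · rw [Real.sign_of_neg h, abs_of_neg h]; ring
  · simp [h]
  · rw [Real.sign_of_pos h, abs_of_pos h]; ring

private lemma sign_mul_sign' {x : ℝ} (hx : x ≠ 0) : Real.sign x * Real.sign x = 1 := by
  rcases hx.lt_or_gt with h | h
  · rw [Real.sign_of_neg h]; ring
  · rw [Real.sign_of_pos h]; ring

/-- The one-dimensional homogeneous system `ż = -c⌊z⌉^α` with `α > 1` reaches the unit ball
within the fixed time `1/(c(α-1))`, uniformly in the initial condition. -/
theorem stmt8 (c α : ℝ) (hc : 0 < c) (hα : 1 < α)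
    (z : ℝ → ℝ)
    (hode : ∀ t, 0 ≤ t → HasDerivAt z (-c * |z t| ^ α * Real.sign (z t)) t) :
    ∀ t, 1 / (c * (α - 1)) ≤ t → |z t| ≤ 1 := by
  intro t ht
  by_contra hgt
  push_neg at hgt
  have hα1 : (0:ℝ) < α - 1 := by linarith
  have hT : 0 < 1 / (c * (α - 1)) := by positivity
  have ht0 : 0 < t := lt_of_lt_of_le hT ht
  -- g = z² is antitone on [0, ∞)
  set g : ℝ → ℝ := fun s => (z s) ^ 2 with hgdef
  have hgd : ∀ s, 0 ≤ s → HasDerivAt g (-(2 * c) * (|z s| ^ α * |z s|)) s := by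
    intro s hs
    have h1 := (hode s hs).pow 2
    refine h1.congr_deriv ?_
    push_cast
    linear_combination (-(2*c) * |z s| ^ α) * self_mul_sign' (z s)
  have hganti : AntitoneOn g (Set.Ici (0:ℝ)) := by
    apply antitoneOn_of_deriv_nonpos (convex_Ici 0)
    · intro s hs
      exact ((hgd s hs).continuousAt).continuousWithinAt
    · intro s hs
      rw [interior_Ici] at hs
      exact (hgd s (le_of_lt hs)).differentiableAt.differentiableWithinAt
    · intro s hs
      rw [interior_Ici] at hs
      rw [(hgd s (le_of_lt hs)).deriv]
      have : (0:ℝ) ≤ |z s| ^ α * |z s| := by positivity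
      nlinarith
  -- on [0, t], |z s| > 1
  have hbig : ∀ s ∈ Set.Icc (0:ℝ) t, 1 < |z s| := by
    intro s hs
    have h1 : g t ≤ g s := hganti hs.1 (le_of_lt ht0) hs.2
    have h2 : 1 < g t := by
      have hgt2 : g t = |z t| ^ 2 := (sq_abs _).symm
      rw [hgt2]
      nlinarith [abs_nonneg (z t)]
    have h3 : 1 < |z s| ^ 2 := by rw [sq_abs]; exact lt_of_lt_of_le h2 h1
    nlinarith [abs_nonneg (z s)]
  -- h s = |z s| ^ (1 - α) - c (α-1) s has zero derivative on [0, t]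
  set h : ℝ → ℝ := fun s => |z s| ^ (1 - α) - c * (α - 1) * s with hhdef
  have hhd : ∀ s ∈ Set.Icc (0:ℝ) t, HasDerivAt h 0 s := by
    intro s hs
    have hzs : 1 < |z s| := hbig s hs
    have hzpos : 0 < |z s| := lt_trans one_pos hzs
    have hzne : z s ≠ 0 := fun h0 => by simp [h0] at hzpos
    have habs : HasDerivAt (fun u => |z u|) (Real.sign (z s) * (-c * |z s| ^ α * Real.sign (z s))) s := by
      have h1 : HasDerivAt (fun x : ℝ => |x|) (Real.sign (z s)) (z s) := by
        have := hasDerivAt_abs hzne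
        convert this using 1
        rcases hzne.lt_or_gt with hlt | hlt
        · simp [Real.sign_of_neg hlt, hlt]
        · simp [Real.sign_of_pos hlt, hlt]
      exact h1.comp s (hode s hs.1)
    have hrpow := habs.rpow_const (p := 1 - α) (Or.inl (ne_of_gt hzpos))
    have heq : Real.sign (z s) * (-c * |z s| ^ α * Real.sign (z s)) * (1 - α) * |z s| ^ (1 - α - 1)
        = c * (α - 1) := by
      rw [show Real.sign (z s) * (-c * |z s| ^ α * Real.sign (z s)) * (1 - α) * |z s| ^ (1 - α - 1)
          = (Real.sign (z s) * Real.sign (z s)) * (-c * (1 - α)) * (|z s| ^ α * |z s| ^ (1 - α - 1)) by ring,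
        sign_mul_sign' hzne, ← Real.rpow_add hzpos]
      norm_num
      ring
    rw [heq] at hrpow
    have := hrpow.sub ((hasDerivAt_id s).const_mul (c * (α - 1)))
    exact this.congr_deriv (by ring)
  have hconst : h t = h 0 := by
    apply constant_of_has_deriv_right_zero
      (fun s hs => ((hhd s hs).continuousAt).continuousWithinAt)
      (fun s hs => ((hhd s ⟨hs.1, le_of_lt hs.2⟩).hasDerivWithinAt))
    exact ⟨le_of_lt ht0, le_refl t⟩
  -- derive contradiction
  have h0big : 1 < |z 0| := hbig 0 ⟨le_refl 0, le_of_lt ht0⟩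
  have hlt1 : |z t| ^ (1 - α) < 1 :=
    Real.rpow_lt_one_of_one_lt_of_neg hgt (by linarith)
  have hpos0 : 0 < |z 0| ^ (1 - α) := Real.rpow_pos_of_pos (lt_trans one_pos h0big) _
  have hct : 1 ≤ c * (α - 1) * t := by
    rw [div_le_iff₀ (by positivity)] at ht
    linarith [ht]
  have := hconst
  simp only [hhdef] at this
  have h0' : |z t| ^ (1 - α) - c * (α - 1) * t = |z 0| ^ (1 - α) := by
    simpa using this
  linarith
end

section
/- Fix an integer r ≥ 1, d > r, set κ = -1/r, c = d/r, and p_i = (r-i+1)/r for i = 1,…,r (so p_i = 1 + (i-1)κ). Then: (a) p_r + κ = 0, so N_r(z) = 1 for every z ≠ 0, and hence ω_{-1/r}(z) = -l_r·sign(z_r - v_{r-1}(z)) for every z ≠ 0; (b) consequently, with φ_{r-1}(z) := z_r - v_{r-1}(z) and M := (l_r + φ̄)/γ_m, the robustified control u(z) := (1/γ_m)·(ω_{-1/r}(z) + φ̄·sign(ω_{-1/r}(z))) satisfies u(z) = -M·sign(φ_{r-1}(z)) for every z ≠ 0; and (c) if l_1,…,l_r > 0, C > 0 and the Lyapunov function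 V₋₁/ᵣ(z) = Σ_{j=1}^r W_j(z)^{(c+1)/(c+p_j)} satisfy, at every z with z_i ≠ v_{i-1}(z) for all i, the pure-chain decrease inequality Σ_{i=1}^{r-1} (∂V₋₁/ᵣ/∂z_i)(z)·z_{i+1} + (∂V₋₁/ᵣ/∂z_r)(z)·ω_{-1/r}(z) ≤ -C·V₋₁/ᵣ(z)^{(c+1-1/r)/(c+1)}, then for every such z ≠ 0, every φ ∈ [-φ̄, φ̄] and every γ ∈ [γ_m, γ_M]: Σ_{i=1}^{r-1} (∂V₋₁/ᵣ/∂z_i)(z)·z_{i+1} + (∂V₋₁/ᵣ/∂z_r)(z)·(φ + γ·u(z)) ≤ -C·V₋₁/ᵣ(z)^{(c+1-1/r)/(c+1)}. Thus the bounded homogeneous arbitrary-order sliding-mode controller u = -M·sign(φ_{r-1}) of Levant is a particular case (κ = -1/r) of the proposed controller. -/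
/-- The `i`-th coordinate (0-based) of `z ∈ ℝ^r`, extended by `0` out of range. -/
noncomputable def coord (r : ℕ) (z : Fin r → ℝ) (i : ℕ) : ℝ :=
  if h : i < r then z ⟨i, h⟩ else 0

/-- `Ssum r κ c i z = Σ_{j=1}^{i} |z_j|^{c/p_j}` with `p_j = 1 + (j-1)κ` (paper 1-based
indices; `k` below is the 0-based index `j-1`). -/
noncomputable def Ssum (r : ℕ) (κ c : ℝ) (i : ℕ) (z : Fin r → ℝ) : ℝ :=
  ∑ k ∈ Finset.range i, |coord r z k| ^ (c / (1 + (k : ℝ) * κ))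

/-- The recursively defined virtual controls: `v_0 = 0` and
`v_i = -l_i N_i sign(z_i - v_{i-1})` with `N_i = (Ssum_i)^{(p_i+κ)/c}`, `p_i = 1 + (i-1)κ`.
The feedback is `ω_κ = vrec r κ c l r`. -/
noncomputable def vrec (r : ℕ) (κ c : ℝ) (l : ℕ → ℝ) : ℕ → (Fin r → ℝ) → ℝ
  | 0 => fun _ => 0
  | i + 1 => fun z =>
      -(l (i + 1)) * (Ssum r κ c (i + 1) z) ^ ((1 + (i : ℝ) * κ + κ) / c) *
        Real.sign (coord r z i - vrec r κ c l i z)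

/-- `⌊x⌉^β = |x|^β sign(x)`. -/
noncomputable def sgnPow (x β : ℝ) : ℝ := |x| ^ β * Real.sign x

/-- `W_i(z) = (Σ_{j=1}^{i-1} |z_j|^{c/p_j})|z_i - v_{i-1}| +
|⌊z_i⌉^{c/p_i+1} - ⌊v_{i-1}⌉^{c/p_i+1}|/(c/p_i+1)` (paper 1-based index `i`). -/
noncomputable def Wfun (r : ℕ) (κ c : ℝ) (l : ℕ → ℝ) : ℕ → (Fin r → ℝ) → ℝ
  | 0 => fun _ => 0
  | i + 1 => fun z =>
      Ssum r κ c i z * |coord r z i - vrec r κ c l i z| +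
        |sgnPow (coord r z i) (c / (1 + (i : ℝ) * κ) + 1) -
            sgnPow (vrec r κ c l i z) (c / (1 + (i : ℝ) * κ) + 1)| /
          (c / (1 + (i : ℝ) * κ) + 1)

/-- The dilation `ζ_ε^p` with weights `p_i = 1 + (i-1)κ` (0-based: `p_j = 1 + jκ`). -/
noncomputable def dil (r : ℕ) (κ ε : ℝ) (z : Fin r → ℝ) : Fin r → ℝ :=
  fun j => ε ^ (1 + (j : ℕ) * κ) * z j

/-- The Lyapunov function `V_κ(z) = Σ_{j=1}^{r} W_j(z)^{(c+1)/(c+p_j)}`. -/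
noncomputable def Vfun (r : ℕ) (κ c : ℝ) (l : ℕ → ℝ) (z : Fin r → ℝ) : ℝ :=
  ∑ j ∈ Finset.range r, (Wfun r κ c l (j + 1) z) ^ ((c + 1) / (c + 1 + (j : ℝ) * κ))

section aux

lemma Ssum_congr {r : ℕ} {κ c : ℝ} {i : ℕ} {z z' : Fin r → ℝ}
    (h : ∀ k, k < i → coord r z k = coord r z' k) :
    Ssum r κ c i z = Ssum r κ c i z' := by
  unfold Ssum
  exact Finset.sum_congr rfl fun k hk => by rw [h k (Finset.mem_range.1 hk)]

lemma vrec_congr {r : ℕ} {κ c : ℝ} {l : ℕ → ℝ} {z z' : Fin r → ℝ} :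
    ∀ i, (∀ k, k < i → coord r z k = coord r z' k) →
    vrec r κ c l i z = vrec r κ c l i z'
  | 0, _ => rfl
  | i + 1, h => by
      simp only [vrec]
      rw [Ssum_congr h, h i (Nat.lt_succ_self i),
        vrec_congr i (fun k hk => h k (hk.trans (Nat.lt_succ_self i)))]

lemma Wfun_congr {r : ℕ} {κ c : ℝ} {l : ℕ → ℝ} {z z' : Fin r → ℝ} (i : ℕ)
    (h : ∀ k, k < i → coord r z k = coord r z' k) :
    Wfun r κ c l i z = Wfun r κ c l i z' := by
  cases i with
  | zero => rfl
  | succ i =>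
    simp only [Wfun]
    rw [Ssum_congr (fun k hk => h k (hk.trans (Nat.lt_succ_self i))),
      h i (Nat.lt_succ_self i),
      vrec_congr i (fun k hk => h k (hk.trans (Nat.lt_succ_self i)))]

lemma Ssum_nonneg {r : ℕ} {κ c : ℝ} {i : ℕ} {z : Fin r → ℝ} :
    0 ≤ Ssum r κ c i z :=
  Finset.sum_nonneg fun _ _ => Real.rpow_nonneg (abs_nonneg _) _

lemma sgnPow_mono {β : ℝ} (hβ : 0 < β) : Monotone fun x => sgnPow x β := by
  have key : ∀ x y : ℝ, 0 ≤ x → x ≤ y → sgnPow x β ≤ sgnPow y β := by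
    intro x y hx hxy
    unfold sgnPow
    rcases eq_or_lt_of_le hx with h | h
    · rcases eq_or_lt_of_le (h ▸ hxy) with h2 | h2
      · rw [← h, ← h2]
      · rw [← h]
        simp [Real.sign_of_pos h2, Real.zero_rpow (ne_of_gt hβ)]
        positivity
    · rw [Real.sign_of_pos h, Real.sign_of_pos (h.trans_le hxy), mul_one, mul_one]
      exact Real.rpow_le_rpow (abs_nonneg _)
        (by rw [abs_of_pos h, abs_of_pos (h.trans_le hxy)]; exact hxy) hβ.le
  have odd : ∀ x : ℝ, sgnPow (-x) β = -sgnPow x β := by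
    intro x; unfold sgnPow; rw [abs_neg, Real.sign_neg, mul_neg]
  intro x y hxy
  rcases le_total 0 x with hx | hx
  · exact key x y hx hxy
  · rcases le_total 0 y with hy | hy
    · calc sgnPow x β ≤ 0 := by
            have h1 := key 0 (-x) le_rfl (by linarith)
            rw [odd] at h1
            have h0 : sgnPow 0 β = 0 := by simp [sgnPow]
            rw [h0] at h1
            linarith
          _ ≤ sgnPow y β := by
            have := key 0 y le_rfl hy
            simpa [sgnPow] using this
    · have := key (-y) (-x) (by linarith) (by linarith)
      rw [odd, odd] at this
      linarith

lemma deriv_nonneg_of_right_mono (g : ℝ → ℝ) (a : ℝ) (h : HasDerivAt g a 0) (ε : ℝ)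
    (hε : 0 < ε) (hm : ∀ t, 0 < t → t < ε → g 0 ≤ g t) : 0 ≤ a := by
  have h2 : Filter.Tendsto (slope g 0) (nhdsWithin 0 (Set.Ioi 0)) (nhds a) :=
    (hasDerivAt_iff_tendsto_slope.1 h).mono_left
      (nhdsWithin_mono _ (fun t ht => ne_of_gt ht))
  refine ge_of_tendsto h2 ?_
  filter_upwards [Ioo_mem_nhdsGT_of_mem (Set.mem_Ico.2 ⟨le_refl 0, hε⟩)] with t ht
  rw [slope_def_field]
  have h3 := hm t ht.1 ht.2
  have h4 : (0:ℝ) < t - 0 := by simpa using ht.1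
  exact div_nonneg (by linarith) h4.le

lemma deriv_nonpos_of_right_anti (g : ℝ → ℝ) (a : ℝ) (h : HasDerivAt g a 0) (ε : ℝ)
    (hε : 0 < ε) (hm : ∀ t, 0 < t → t < ε → g t ≤ g 0) : a ≤ 0 := by
  have h2 : Filter.Tendsto (slope g 0) (nhdsWithin 0 (Set.Ioi 0)) (nhds a) :=
    (hasDerivAt_iff_tendsto_slope.1 h).mono_left
      (nhdsWithin_mono _ (fun t ht => ne_of_gt ht))
  refine le_of_tendsto h2 ?_
  filter_upwards [Ioo_mem_nhdsGT_of_mem (Set.mem_Ico.2 ⟨le_refl 0, hε⟩)] with t ht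
  rw [slope_def_field]
  have h3 := hm t ht.1 ht.2
  have h4 : (0:ℝ) < t - 0 := by simpa using ht.1
  exact div_nonpos_of_nonpos_of_nonneg (by linarith) h4.le

end aux


set_option maxHeartbeats 1000000 in
/-- Levant's homogeneous arbitrary-order sliding-mode controller as the particular case
`κ = -1/r`, `c = d/r` (`d > r`) of the proposed controller:
(a) `p_r + κ = 0`, so `N_r(z) = 1` and `ω_{-1/r}(z) = -l_r sign(z_r - v_{r-1}(z))` for `z ≠ 0`;
(b) the robustified control `u = (ω_{-1/r} + φ̄ sign(ω_{-1/r}))/γ_m` equals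
`-M sign(φ_{r-1})` with `M = (l_r + φ̄)/γ_m` and `φ_{r-1} = z_r - v_{r-1}`;
(c) if `V_{-1/r}` satisfies the pure-chain decrease inequality, then it satisfies the same
inequality along the perturbed chain closed by `u`, for all `φ ∈ [-φ̄, φ̄]`,
`γ ∈ [γ_m, γ_M]`. -/
theorem stmt17 (r : ℕ) (hr : 1 ≤ r) (d : ℝ) (hd : (r : ℝ) < d)
    (κ c : ℝ) (hκ : κ = -(1 / (r : ℝ))) (hcc : c = d / (r : ℝ))
    (l : ℕ → ℝ) (hl : ∀ i, 1 ≤ i → i ≤ r → 0 < l i)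
    (φbar γm γM C : ℝ) (hφ : 0 ≤ φbar) (hγm : 0 < γm) (hγ : γm ≤ γM) (hC : 0 < C) :
    (∀ z : Fin r → ℝ, z ≠ 0 →
        (Ssum r κ c r z) ^ ((1 + ((r - 1 : ℕ) : ℝ) * κ + κ) / c) = 1 ∧
        vrec r κ c l r z =
          -(l r) * Real.sign (coord r z (r - 1) - vrec r κ c l (r - 1) z)) ∧
    (∀ z : Fin r → ℝ, z ≠ 0 →
        (1 / γm) * (vrec r κ c l r z + φbar * Real.sign (vrec r κ c l r z)) =
          -((l r + φbar) / γm) *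
            Real.sign (coord r z (r - 1) - vrec r κ c l (r - 1) z)) ∧
    ((∀ z : Fin r → ℝ, (∀ i, i < r → coord r z i ≠ vrec r κ c l i z) →
        fderiv ℝ (Vfun r κ c l) z
            (fun j : Fin r =>
              if h : (j : ℕ) + 1 < r then z ⟨(j : ℕ) + 1, h⟩ else vrec r κ c l r z) ≤
          -C * (Vfun r κ c l z) ^ ((c + 1 + κ) / (c + 1))) →
      ∀ z : Fin r → ℝ, z ≠ 0 → (∀ i, i < r → coord r z i ≠ vrec r κ c l i z) →
        ∀ φ γ : ℝ, |φ| ≤ φbar → γm ≤ γ → γ ≤ γM →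
          fderiv ℝ (Vfun r κ c l) z
              (fun j : Fin r =>
                if h : (j : ℕ) + 1 < r then z ⟨(j : ℕ) + 1, h⟩
                else φ + γ * ((1 / γm) *
                  (vrec r κ c l r z + φbar * Real.sign (vrec r κ c l r z)))) ≤
            -C * (Vfun r κ c l z) ^ ((c + 1 + κ) / (c + 1))) := by
  have hrR : (0:ℝ) < (r:ℝ) := by exact_mod_cast hr
  have hrc : ((r - 1 : ℕ) : ℝ) = (r:ℝ) - 1 := by
    rw [Nat.cast_sub hr]; norm_num
  have hexp0 : (1 + ((r - 1 : ℕ) : ℝ) * κ + κ) / c = 0 := by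
    rw [hrc, hκ]
    field_simp
    ring
  -- part (a), stated without z ≠ 0
  have hA : ∀ z : Fin r → ℝ,
      (Ssum r κ c r z) ^ ((1 + ((r - 1 : ℕ) : ℝ) * κ + κ) / c) = 1 ∧
      vrec r κ c l r z =
        -(l r) * Real.sign (coord r z (r - 1) - vrec r κ c l (r - 1) z) := by
    intro z
    constructor
    · rw [hexp0, Real.rpow_zero]
    · have h1 : vrec r κ c l r z = vrec r κ c l ((r - 1) + 1) z :=
        (congrArg (fun n => vrec r κ c l n z) (Nat.sub_add_cancel hr)).symm
      rw [h1]
      show -(l ((r-1) + 1)) * (Ssum r κ c ((r-1) + 1) z) ^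
          ((1 + ((r-1 : ℕ) : ℝ) * κ + κ) / c) *
          Real.sign (coord r z (r-1) - vrec r κ c l (r-1) z) = _
      rw [hexp0, Real.rpow_zero, mul_one, Nat.sub_add_cancel hr]
  have hlr : 0 < l r := hl r hr le_rfl
  -- part (b), stated without z ≠ 0
  have hB : ∀ z : Fin r → ℝ,
      (1 / γm) * (vrec r κ c l r z + φbar * Real.sign (vrec r κ c l r z)) =
        -((l r + φbar) / γm) *
          Real.sign (coord r z (r - 1) - vrec r κ c l (r - 1) z) := by
    intro z
    rw [(hA z).2]
    set x := coord r z (r - 1) - vrec r κ c l (r - 1) z with hx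
    rcases lt_trichotomy x 0 with h | h | h
    · rw [Real.sign_of_neg h]
      have : -(l r) * (-1 : ℝ) = l r := by ring
      rw [this, Real.sign_of_pos hlr]
      field_simp
      try ring
    · rw [h, Real.sign_zero, mul_zero, Real.sign_zero]
      ring
    · rw [Real.sign_of_pos h]
      have : -(l r) * (1 : ℝ) = -(l r) := by ring
      rw [this, Real.sign_of_neg (by linarith : -(l r) < 0)]
      field_simp
      try ring
  refine ⟨fun z _ => hA z, fun z _ => hB z, ?_⟩
  intro hchain z hz hcond φ γ hφγ hγ1 hγ2
  have hpure := hchain z hcond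
  by_cases hdiff : DifferentiableAt ℝ (Vfun r κ c l) z
  swap
  · rw [fderiv_zero_of_not_differentiableAt hdiff] at hpure ⊢
    simpa using hpure
  set jlast : Fin r := ⟨r - 1, by omega⟩ with hjl
  have hcoordlast : coord r z (r - 1) = z jlast := by
    unfold coord; rw [dif_pos (by omega : r - 1 < r)]
  set v := vrec r κ c l (r - 1) z with hv
  set x := z jlast - v with hxdef
  have hx0 : x ≠ 0 := by
    have h1 := hcond (r - 1) (by omega)
    rw [hcoordlast] at h1
    exact sub_ne_zero.2 h1
  have hω : vrec r κ c l r z = -(l r) * Real.sign x := by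
    rw [(hA z).2, hcoordlast]
  set e : Fin r → ℝ := Pi.single jlast 1 with he
  set L := fderiv ℝ (Vfun r κ c l) z with hLdef
  set u : ℝ := (1 / γm) * (vrec r κ c l r z + φbar * Real.sign (vrec r κ c l r z)) with hu
  set δ : ℝ := (φ + γ * u) - vrec r κ c l r z with hδ
  have hwe : (fun j : Fin r => if h : (j : ℕ) + 1 < r then z ⟨(j : ℕ) + 1, h⟩
        else φ + γ * u)
      = (fun j : Fin r => if h : (j : ℕ) + 1 < r then z ⟨(j : ℕ) + 1, h⟩
        else vrec r κ c l r z) + δ • e := by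
    funext j
    by_cases hj : (j : ℕ) + 1 < r
    · have hne : j ≠ jlast := by
        intro hjj
        have : (j : ℕ) = r - 1 := by rw [hjj]
        omega
      simp only [Pi.add_apply, Pi.smul_apply, he, Pi.single_eq_of_ne hne,
        dif_pos hj, smul_eq_mul, mul_zero, add_zero]
    · have hje : j = jlast := by
        apply Fin.ext
        have h2 := j.isLt
        show (j : ℕ) = r - 1
        omega
      subst hje
      rw [Pi.add_apply, Pi.smul_apply, dif_neg hj, dif_neg hj]
      simp only [he, Pi.single_eq_same, smul_eq_mul, mul_one, hδ]
      ring
  rw [hwe, map_add, map_smul, smul_eq_mul]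
  -- derivative of V along the direction e
  have hc : HasDerivAt (fun t : ℝ => z + t • e) e 0 := by
    simpa using ((hasDerivAt_id (0:ℝ)).smul_const e).const_add z
  have hg : HasDerivAt (fun t : ℝ => Vfun r κ c l (z + t • e)) (L e) 0 := by
    have h2 : HasFDerivAt (Vfun r κ c l) L z := hdiff.hasFDerivAt
    have h3 : HasFDerivAt (Vfun r κ c l) L ((fun t : ℝ => z + t • e) 0) := by
      simpa using h2
    exact h3.comp_hasDerivAt 0 hc
  -- coordinates along the line
  have hcoord_ne : ∀ (t : ℝ) (k : ℕ), k < r - 1 → coord r (z + t • e) k = coord r z k := by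
    intro t k hk
    unfold coord
    rw [dif_pos (by omega : k < r), dif_pos (by omega : k < r)]
    have hne : (⟨k, by omega⟩ : Fin r) ≠ jlast := by
      intro h
      have : k = r - 1 := by
        have := congrArg Fin.val h
        simpa using this
      omega
    simp [he, Pi.single_eq_of_ne hne]
  have hcoord_last : ∀ t : ℝ, coord r (z + t • e) (r - 1) = z jlast + t := by
    intro t
    unfold coord
    rw [dif_pos (by omega : r - 1 < r)]
    show z jlast + t * e jlast = _
    simp [he, Pi.single_eq_same]
  -- constants
  have hden : 1 + ((r - 1 : ℕ) : ℝ) * κ = 1 / (r : ℝ) := by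
    rw [hrc, hκ]; field_simp; ring
  have hd0 : (0:ℝ) < d := lt_trans hrR hd
  have hcpos : 0 < c := by rw [hcc]; exact div_pos hd0 hrR
  set m : ℝ := c / (1 + ((r - 1 : ℕ) : ℝ) * κ) with hmdef
  have hm1 : 0 < m + 1 := by
    have h7 : 0 < m := by
      rw [hmdef, hden]
      exact div_pos hcpos (by positivity)
    linarith
  set β : ℝ := (c + 1) / (c + 1 + ((r - 1 : ℕ) : ℝ) * κ) with hβdef
  have hβpos : 0 ≤ β := by
    rw [hβdef]
    apply div_nonneg (by linarith)
    have h8 : c + 1 + ((r - 1 : ℕ) : ℝ) * κ = c + 1 / (r : ℝ) := by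
      rw [hrc, hκ]; field_simp; ring
    rw [h8]; positivity
  set S := Ssum r κ c (r - 1) z with hS
  set F : ℝ → ℝ := fun y => sgnPow y (m + 1) with hF
  set ψ : ℝ → ℝ := fun y => S * |y - v| + |F y - F v| / (m + 1) with hψ
  set Cst := ∑ j ∈ Finset.range (r - 1),
      (Wfun r κ c l (j + 1) z) ^ ((c + 1) / (c + 1 + (j : ℝ) * κ)) with hCst
  have hVform : ∀ t : ℝ, Vfun r κ c l (z + t • e) = Cst + (ψ (z jlast + t)) ^ β := by
    intro t
    rw [Vfun]
    have hrange : Finset.range r = Finset.range ((r - 1) + 1) := by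
      rw [Nat.sub_add_cancel hr]
    rw [hrange, Finset.sum_range_succ]
    congr 1
    · rw [hCst]
      refine Finset.sum_congr rfl fun j hj => ?_
      have hj' := Finset.mem_range.1 hj
      rw [Wfun_congr (j + 1) (fun k hk => hcoord_ne t k (by omega))]
    · have hWlast : Wfun r κ c l ((r - 1) + 1) (z + t • e) = ψ (z jlast + t) := by
        show Ssum r κ c (r - 1) (z + t • e) *
            |coord r (z + t • e) (r - 1) - vrec r κ c l (r - 1) (z + t • e)| +
            |sgnPow (coord r (z + t • e) (r - 1)) (c / (1 + ((r - 1 : ℕ) : ℝ) * κ) + 1) -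
              sgnPow (vrec r κ c l (r - 1) (z + t • e))
                (c / (1 + ((r - 1 : ℕ) : ℝ) * κ) + 1)| /
            (c / (1 + ((r - 1 : ℕ) : ℝ) * κ) + 1) = _
        rw [Ssum_congr (fun k hk => hcoord_ne t k hk),
          vrec_congr (r - 1) (fun k hk => hcoord_ne t k hk), hcoord_last t]
      rw [hWlast]
  have hψ_nonneg : ∀ y, 0 ≤ ψ y := fun y =>
    add_nonneg (mul_nonneg Ssum_nonneg (abs_nonneg _)) (div_nonneg (abs_nonneg _) hm1.le)
  have hψ_up : ∀ a b, v ≤ a → a ≤ b → ψ a ≤ ψ b := by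
    intro a b ha hab
    have hFa : F v ≤ F a := sgnPow_mono hm1 ha
    have hFb : F a ≤ F b := sgnPow_mono hm1 hab
    show S * |a - v| + |F a - F v| / (m + 1) ≤ S * |b - v| + |F b - F v| / (m + 1)
    rw [abs_of_nonneg (by linarith : (0:ℝ) ≤ a - v),
      abs_of_nonneg (by linarith : (0:ℝ) ≤ b - v),
      abs_of_nonneg (by linarith : (0:ℝ) ≤ F a - F v),
      abs_of_nonneg (by linarith : (0:ℝ) ≤ F b - F v)]
    gcongr <;> first | exact Ssum_nonneg | linarith
  have hψ_down : ∀ a b, a ≤ b → b ≤ v → ψ b ≤ ψ a := by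
    intro a b hab hb
    have hFa : F a ≤ F b := sgnPow_mono hm1 hab
    have hFb : F b ≤ F v := sgnPow_mono hm1 hb
    show S * |b - v| + |F b - F v| / (m + 1) ≤ S * |a - v| + |F a - F v| / (m + 1)
    rw [abs_of_nonpos (by linarith : b - v ≤ (0:ℝ)),
      abs_of_nonpos (by linarith : a - v ≤ (0:ℝ)),
      abs_of_nonpos (by linarith : F b - F v ≤ (0:ℝ)),
      abs_of_nonpos (by linarith : F a - F v ≤ (0:ℝ))]
    gcongr <;> first | exact Ssum_nonneg | linarith
  -- sign of the directional derivative
  have hu_val : u = -((l r + φbar) / γm) * Real.sign x := by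
    rw [hu, hB z, hcoordlast]
  have hA0 : 0 ≤ (l r + φbar) / γm := by positivity
  have h7 : γm * ((l r + φbar) / γm) = l r + φbar := by field_simp
  have h6 : l r + φbar ≤ γ * ((l r + φbar) / γm) := by
    nlinarith [mul_le_mul_of_nonneg_right hγ1 hA0]
  have hφ2 := abs_le.1 hφγ
  have hδLe : δ * L e ≤ 0 := by
    rcases lt_or_gt_of_ne hx0 with hneg | hpos
    · have hs : Real.sign x = -1 := Real.sign_of_neg hneg
      have hLe : L e ≤ 0 := by
        apply deriv_nonpos_of_right_anti _ _ hg (-x) (by linarith)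
        intro t ht1 ht2
        rw [hVform, hVform]
        have h9 : ψ (z jlast + t) ≤ ψ (z jlast + 0) := by
          apply hψ_down (z jlast + 0) (z jlast + t) (by linarith)
          rw [hxdef] at ht2
          linarith
        have := Real.rpow_le_rpow (hψ_nonneg _) h9 hβpos
        linarith
      have hδ0 : 0 ≤ δ := by
        have h10 : δ = φ + γ * ((l r + φbar) / γm) - l r := by
          rw [hδ, hω, hu_val, hs]; ring
        rw [h10]; linarith
      exact mul_nonpos_iff.2 (Or.inl ⟨hδ0, hLe⟩)
    · have hs : Real.sign x = 1 := Real.sign_of_pos hpos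
      have hLe : 0 ≤ L e := by
        apply deriv_nonneg_of_right_mono _ _ hg 1 one_pos
        intro t ht1 ht2
        rw [hVform, hVform]
        have h9 : ψ (z jlast + 0) ≤ ψ (z jlast + t) := by
          apply hψ_up (z jlast + 0) (z jlast + t) _ (by linarith)
          rw [hxdef] at hpos
          linarith
        have := Real.rpow_le_rpow (hψ_nonneg _) h9 hβpos
        linarith
      have hδ0 : δ ≤ 0 := by
        have h10 : δ = φ - γ * ((l r + φbar) / γm) + l r := by
          rw [hδ, hω, hu_val, hs]; ring
        rw [h10]; linarith
      exact mul_nonpos_iff.2 (Or.inr ⟨hδ0, hLe⟩)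
  have hfin := add_le_add hpure hδLe
  rw [add_zero] at hfin
  exact hfin
end
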